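/- arXiv:math/9911070 — 2 statements merged into one kernel-verified Lean document; each statement's English description precedes it below -/
import Mathlib

section
/- Let n > q ≥ 1 be coprime integers and let a₁,…,a_s be the unique sequence of integers with a_i ≥ 2 and [a₁,…,a_s] = n/(n−q). Define (i₁,j₁) = (n,0), (i₂,j₂) = (n−q,1), and (i_{k+1}, j_{k+1}) = a_{k-1}·(i_k, j_k) − (i_{k-1}, j_{k-1}) for 2 ≤ k ≤ s+1. Then the final pair is (i_{s+2}, j_{s+2}) = (0, n). -/
/-- The negative (Hirzebruch–Jung) continued fraction `[a₁,…,a_s] = a₁ − 1/(a₂ − 1/(⋯ − 1/a_s))`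
of a list of integers, as an element of `ℚ`; `none` if it is not well defined, i.e. if some
intermediate denominator vanishes (or the list is empty). -/
def ncf : List ℤ → Option ℚ
  | [] => none
  | [a] => some (a : ℚ)
  | a :: b :: rest =>
      match ncf (b :: rest) with
      | none => none
      | some v => if v = 0 then none else some ((a : ℚ) - 1 / v)

/-- The exponent pairs `(i_k, j_k)` of the canonical coordinates `z_k = x^{i_k} y^{j_k}`
(with 0-based index: `seqIJ n q a m = (i_{m+1}, j_{m+1})`), defined by
`(i₁,j₁) = (n,0)`, `(i₂,j₂) = (n−q,1)` and
`(i_{k+1}, j_{k+1}) = a_{k-1}·(i_k, j_k) − (i_{k-1}, j_{k-1})`,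
where `a m` is the 0-based `m`-th entry, i.e. `a_{m+1}`. -/
def seqIJ (n q : ℤ) (a : ℕ → ℤ) : ℕ → ℤ × ℤ
  | 0 => (n, 0)
  | 1 => (n - q, 1)
  | (m + 2) =>
      (a m * (seqIJ n q a (m + 1)).1 - (seqIJ n q a m).1,
       a m * (seqIJ n q a (m + 1)).2 - (seqIJ n q a m).2)

/-- Run the `seqIJ` recursion along a list, starting from two consecutive pairs. -/
def runP : List ℤ → ℤ × ℤ → ℤ × ℤ → ℤ × ℤ
  | [], _, p2 => p2
  | c :: l, p1, p2 => runP l p2 (c * p2.1 - p1.1, c * p2.2 - p1.2)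

lemma seq_runP (n q : ℤ) (f : ℕ → ℤ) :
    ∀ (l : List ℤ) (k : ℕ), (∀ m, m < l.length → f (k + m) = l.getD m 0) →
    seqIJ n q f (k + 1 + l.length) = runP l (seqIJ n q f k) (seqIJ n q f (k + 1)) := by
  intro l
  induction l with
  | nil => intro k _; simp [runP]
  | cons c t ih =>
    intro k h
    have h0 : f k = c := by simpa using h 0 (by simp)
    have hlen : k + 1 + (c :: t).length = (k + 1) + 1 + t.length := by
      simp [List.length_cons]; ring
    rw [hlen, ih (k + 1) (fun m hm => by
      have := h (m + 1) (by simpa using Nat.succ_lt_succ hm)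
      simpa [Nat.add_comm, Nat.add_assoc, Nat.add_left_comm] using this)]
    have h2 : seqIJ n q f (k + 2) =
        (f k * (seqIJ n q f (k + 1)).1 - (seqIJ n q f k).1,
         f k * (seqIJ n q f (k + 1)).2 - (seqIJ n q f k).2) := rfl
    simp [runP, show k + 1 + 1 = k + 2 from rfl, h2, h0]

lemma ncf_pos : ∀ (l : List ℤ), (∀ x ∈ l, 2 ≤ x) → ∀ v : ℚ, ncf l = some v → 1 < v := by
  intro l
  induction l with
  | nil => intro _ v hv; simp [ncf] at hv
  | cons c t ih =>
    intro h2 v hv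
    match t with
    | [] =>
      simp only [ncf, Option.some.injEq] at hv
      have : (2 : ℤ) ≤ c := h2 c (by simp)
      have : (2 : ℚ) ≤ (c : ℚ) := by exact_mod_cast this
      linarith [hv ▸ this]
    | b :: rest =>
      simp only [ncf] at hv
      rcases hw : ncf (b :: rest) with _ | w
      · rw [hw] at hv; simp at hv
      · rw [hw] at hv
        have hw1 : 1 < w := ih (fun x hx => h2 x (by simp [hx])) w hw
        have hwne : ¬ (w = 0) := by positivity
        change (if w = 0 then none else some ((c : ℚ) - 1 / w)) = some v at hv
        rw [if_neg hwne, Option.some.injEq] at hv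
        have : (2 : ℤ) ≤ c := h2 c (by simp)
        have hc : (2 : ℚ) ≤ (c : ℚ) := by exact_mod_cast this
        have : (0:ℚ) < 1 / w := by positivity
        have : 1 / w < 1 := by
          rw [div_lt_one (by linarith)]; linarith
        linarith [hv ▸ (by linarith : (1:ℚ) < (c:ℚ) - 1 / w)]

lemma gcd_step (x y c : ℤ) : Int.gcd y (c * y - x) = Int.gcd y x := by
  apply Nat.dvd_antisymm
  · have h1 : (↑(Int.gcd y (c * y - x)) : ℤ) ∣ y := Int.gcd_dvd_left _ _
    have h2 : (↑(Int.gcd y (c * y - x)) : ℤ) ∣ (c * y - x) := Int.gcd_dvd_right _ _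
    have : (↑(Int.gcd y (c * y - x)) : ℤ) ∣ x := by
      have := dvd_sub (h1.mul_left c) h2
      simpa using this
    exact_mod_cast Int.dvd_coe_gcd h1 this
  · have h1 : (↑(Int.gcd y x) : ℤ) ∣ y := Int.gcd_dvd_left _ _
    have h2 : (↑(Int.gcd y x) : ℤ) ∣ x := Int.gcd_dvd_right _ _
    exact_mod_cast Int.dvd_coe_gcd h1 (dvd_sub (h1.mul_left c) h2)

lemma run_main (N : ℤ) : ∀ (l : List ℤ), (∀ x ∈ l, 2 ≤ x) → ∀ (v : ℚ) (p1 p2 : ℤ × ℤ),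
    ncf l = some v → (p1.1 : ℚ) = v * p2.1 → 0 < p2.1 →
    p1.1 * p2.2 - p2.1 * p1.2 = N → Int.gcd p1.1 p2.1 = 1 →
    runP l p1 p2 = (0, N) := by
  intro l
  induction l with
  | nil => intro _ v _ _ hv; simp [ncf] at hv
  | cons c t ih =>
    intro h2 v p1 p2 hv hrat hpos hdet hgcd
    match t with
    | [] =>
      simp only [ncf, Option.some.injEq] at hv
      subst hv
      have hx : p1.1 = c * p2.1 := by exact_mod_cast hrat
      have hdvd : p2.1 ∣ p1.1 := ⟨c, by linarith [hx]⟩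
      have hone : p2.1 = 1 := by
        have : p2.1 ∣ (↑(Int.gcd p1.1 p2.1) : ℤ) := Int.dvd_coe_gcd hdvd dvd_rfl
        rw [hgcd] at this
        have := Int.le_of_dvd one_pos this
        omega
      have : runP [c] p1 p2 = (c * p2.1 - p1.1, c * p2.2 - p1.2) := rfl
      rw [this, hx]
      have e1 : c * p2.1 - c * p2.1 = 0 := by ring
      have e2 : c * p2.2 - p1.2 = N := by rw [← hdet, hx, hone]; ring
      rw [e1, e2]
    | b :: rest =>
      simp only [ncf] at hv
      rcases hw : ncf (b :: rest) with _ | w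
      · rw [hw] at hv; simp at hv
      · rw [hw] at hv
        have hw1 : 1 < w := ncf_pos _ (fun x hx => h2 x (by simp [hx])) w hw
        have hwne : ¬ (w = 0) := by positivity
        change (if w = 0 then none else some ((c : ℚ) - 1 / w)) = some v at hv
        rw [if_neg hwne, Option.some.injEq] at hv
        set p3 : ℤ × ℤ := (c * p2.1 - p1.1, c * p2.2 - p1.2) with hp3
        have hrat' : (p2.1 : ℚ) = w * p3.1 := by
          have : (p3.1 : ℚ) = c * p2.1 - p1.1 := by push_cast [hp3]; ring
          rw [this, hrat, ← hv]
          field_simp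
          ring
        have hpos' : 0 < p3.1 := by
          have : (0 : ℚ) < (p3.1 : ℚ) := by
            have hq2 : (0 : ℚ) < (p2.1 : ℚ) := by exact_mod_cast hpos
            nlinarith [hrat']
          exact_mod_cast this
        have hdet' : p2.1 * p3.2 - p3.1 * p2.2 = N := by
          rw [← hdet, hp3]; ring
        have hgcd' : Int.gcd p2.1 p3.1 = 1 := by
          rw [hp3]
          simpa [gcd_step p1.1 p2.1 c, Int.gcd_comm] using hgcd
        have : runP (c :: b :: rest) p1 p2 = runP (b :: rest) p2 p3 := rfl
        rw [this]
        exact ih (fun x hx => h2 x (by simp [hx])) w p2 p3 hw hrat' hpos' hdet' hgcd'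

theorem stmt11 (n q : ℤ) (hq : 1 ≤ q) (hqn : q < n) (hco : Int.gcd n q = 1)
    (a : List ℤ) (ha2 : ∀ x ∈ a, 2 ≤ x)
    (hval : ncf a = some ((n : ℚ) / ((n : ℚ) - (q : ℚ)))) :
    seqIJ n q (fun m => a.getD m 0) (a.length + 1) = (0, n) := by
  have key := seq_runP n q (fun m => a.getD m 0) a 0 (fun m _ => by simp)
  have hidx : a.length + 1 = 0 + 1 + a.length := by omega
  rw [hidx, key]
  have h0 : seqIJ n q (fun m => a.getD m 0) 0 = (n, 0) := rfl
  have h1 : seqIJ n q (fun m => a.getD m 0) 1 = (n - q, 1) := rfl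
  rw [h0, h1]
  have hnq : (0:ℤ) < n - q := by omega
  have hnqQ : ((n:ℚ) - q) ≠ 0 := by
    have : (q:ℚ) < n := by exact_mod_cast hqn
    linarith
  apply run_main n a ha2 _ (n, 0) (n - q, 1) hval
  · push_cast
    field_simp
  · exact hnq
  · simp
  · show Int.gcd n (n - q) = 1
    have h := gcd_step q n 1
    simp only [one_mul] at h
    rw [h, hco]
end

section
/- Let n > q ≥ 1 be coprime integers, ζ = exp(2πi/n), and let Γ(n,q) ⊂ GL(2,ℂ) be generated by diag(ζ, ζ^q), acting on ℂ[x,y] by x ↦ ζx, y ↦ ζ^q y. Let a₁,…,a_s be the unique sequence with a_i ≥ 2 and [a₁,…,a_s] = n/(n−q), and let (i_k, j_k), 1 ≤ k ≤ s+2, be defined by (i₁,j₁) = (n,0), (i₂,j₂) = (n−q,1), (i_{k+1}, j_{k+1}) = a_{k-1}·(i_k, j_k) − (i_{k-1}, j_{k-1}). Then the invariant ring ℂ[x,y]^{Γ(n,q)} is generated as a ℂ-algebra by the e = s+2 monomials z_k = x^{i_k} y^{j_k}, k = 1,…,s+2. -/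
/-! ### Arithmetic lemmas about `seqIJ` and `ncf` -/

lemma seqIJ_dvd (n q : ℤ) (g : ℕ → ℤ) :
    ∀ k, n ∣ (seqIJ n q g k).1 + q * (seqIJ n q g k).2
  | 0 => by simp [seqIJ]
  | 1 => ⟨1, by simp [seqIJ]⟩
  | (m+2) => by
      obtain ⟨c1, hc1⟩ := seqIJ_dvd n q g m
      obtain ⟨c2, hc2⟩ := seqIJ_dvd n q g (m+1)
      exact ⟨g m * c2 - c1, by simp only [seqIJ]; linear_combination g m * hc2 - hc1⟩

lemma seqIJ_det (n q : ℤ) (g : ℕ → ℤ) :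
    ∀ k, (seqIJ n q g k).1 * (seqIJ n q g (k+1)).2
        - (seqIJ n q g (k+1)).1 * (seqIJ n q g k).2 = n
  | 0 => by simp [seqIJ]
  | (k+1) => by
      have h := seqIJ_det n q g k
      show (seqIJ n q g (k+1)).1 * (seqIJ n q g (k+2)).2
        - (seqIJ n q g (k+2)).1 * (seqIJ n q g (k+1)).2 = n
      simp only [seqIJ]
      linear_combination h

lemma ncf_gt_one : ∀ l : List ℤ, (∀ x ∈ l, 2 ≤ x) → ∀ v : ℚ, ncf l = some v → 1 < v
  | [] => by simp [ncf]
  | [a] => by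
      intro h v hv
      simp only [ncf, Option.some.injEq] at hv
      have : (2:ℚ) ≤ (a:ℚ) := by exact_mod_cast h a (by simp)
      linarith [hv ▸ this]
  | a :: b :: rest => by
      intro h v hv
      have hw' : ∃ w, ncf (b :: rest) = some w := by
        rcases hne : ncf (b :: rest) with _ | w
        · simp only [ncf, hne] at hv
          cases hv
        · exact ⟨w, rfl⟩
      obtain ⟨w, hw⟩ := hw'
      have hw1 : 1 < w := ncf_gt_one (b :: rest) (fun x hx => h x (by simp [hx])) w hw
      have hwne : w ≠ 0 := by linarith
      simp only [ncf, hw, if_neg hwne, Option.some.injEq] at hv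
      have ha : (2:ℚ) ≤ (a:ℚ) := by exact_mod_cast h a (by simp)
      have h1 : 1 / w < 1 := by rw [div_lt_one (by linarith)]; linarith
      have h0 : 0 < 1 / w := by positivity
      linarith [hv]

lemma ncf_cons (x : ℤ) (l : List ℤ) (v : ℚ) (hl : l ≠ []) (hv : ncf (x :: l) = some v) :
    ∃ w, ncf l = some w ∧ w ≠ 0 ∧ v = (x:ℚ) - 1 / w := by
  match l with
  | [] => exact absurd rfl hl
  | b :: rest =>
    rcases hne : ncf (b :: rest) with _ | w
    · simp only [ncf, hne] at hv; cases hv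
    · simp only [ncf, hne] at hv
      by_cases h0 : w = 0
      · rw [if_pos h0] at hv; cases hv
      · rw [if_neg h0] at hv
        exact ⟨w, rfl, h0, (Option.some.injEq _ _ ▸ hv).symm⟩

lemma seqIJ_key (n q : ℤ) (a : List ℤ) (hq : 1 ≤ q) (hqn : q < n)
    (ha2 : ∀ x ∈ a, 2 ≤ x)
    (hval : ncf a = some ((n : ℚ) / ((n : ℚ) - (q : ℚ)))) :
    ∀ m, m < a.length →
      ∃ v : ℚ, ncf (a.drop m) = some v ∧
        ((seqIJ n q (fun t => a.getD t 0) (m+1)).1 : ℚ) * v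
          = ((seqIJ n q (fun t => a.getD t 0) m).1 : ℚ) ∧
        0 < (seqIJ n q (fun t => a.getD t 0) (m+1)).1 := by
  intro m
  induction m with
  | zero =>
    intro _
    have hne : ((n:ℚ) - (q:ℚ)) ≠ 0 := by
      have : (q:ℚ) < (n:ℚ) := by exact_mod_cast hqn
      linarith
    refine ⟨_, by simpa using hval, ?_, ?_⟩
    · show (((n - q : ℤ) : ℚ)) * ((n : ℚ) / ((n : ℚ) - (q : ℚ))) = ((n : ℤ) : ℚ)
      push_cast
      field_simp
    · show (0:ℤ) < n - q
      omega
  | succ m ih =>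
    intro hm1
    have hm : m < a.length := Nat.lt_of_succ_lt hm1
    obtain ⟨v, hv, hrel, hpos⟩ := ih hm
    have hdrop : a.drop m = a[m] :: a.drop (m+1) := List.drop_eq_getElem_cons hm
    have hne : a.drop (m+1) ≠ [] := by
      rw [List.drop_eq_getElem_cons hm1]
      exact List.cons_ne_nil _ _
    rw [hdrop] at hv
    obtain ⟨w, hw, hw0, hvw⟩ := ncf_cons _ _ _ hne hv
    have hw1 : 1 < w := ncf_gt_one _ (fun x hx => ha2 x (List.mem_of_mem_drop hx)) w hw
    have hgm : a.getD m 0 = a[m] := List.getD_eq_getElem _ _ hm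
    set I1 : ℤ := (seqIJ n q (fun t => a.getD t 0) (m+1)).1 with hI1
    set I0 : ℤ := (seqIJ n q (fun t => a.getD t 0) m).1 with hI0
    have hI2 : (seqIJ n q (fun t => a.getD t 0) (m+2)).1 = a[m] * I1 - I0 := by
      simp only [seqIJ, hgm, hI1, hI0]
    have hvw2 : v * w = (a[m] : ℚ) * w - 1 := by
      field_simp at hvw
      linarith [hvw]
    have hposQ : (0:ℚ) < (I1 : ℚ) := by exact_mod_cast hpos
    have keyA : (((a[m] * I1 - I0 : ℤ)) : ℚ) * w = (I1 : ℚ) := by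
      push_cast
      linear_combination w * hrel - (I1 : ℚ) * hvw2
    refine ⟨w, hw, ?_, ?_⟩
    · rw [hI2]; exact keyA
    · rw [hI2]
      have : (0:ℚ) < ((a[m] * I1 - I0 : ℤ) : ℚ) := by
        have hww : (0:ℚ) < w := by linarith
        nlinarith [keyA]
      exact_mod_cast this

section pack
variable (n q : ℤ) (a : List ℤ) (hq : 1 ≤ q) (hqn : q < n) (hco : Int.gcd n q = 1)
  (ha2 : ∀ x ∈ a, 2 ≤ x)
  (hval : ncf a = some ((n : ℚ) / ((n : ℚ) - (q : ℚ))))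

include hq hqn ha2 hval

lemma seqIJ_I_pos : ∀ m ≤ a.length, 0 < (seqIJ n q (fun t => a.getD t 0) m).1 := by
  intro m hm
  match m with
  | 0 => show (0:ℤ) < n; omega
  | (k+1) =>
    obtain ⟨v, _, _, hpos⟩ := seqIJ_key n q a hq hqn ha2 hval k (by omega)
    exact hpos

lemma seqIJ_a_ne_nil : a ≠ [] := by
  intro h
  rw [h] at hval
  exact absurd hval (by simp [ncf])

lemma seqIJ_I_last : (seqIJ n q (fun t => a.getD t 0) (a.length + 1)).1 = 0 := by
  obtain ⟨t, ht⟩ : ∃ t, a.length = t + 1 := by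
    have := seqIJ_a_ne_nil n q a hq hqn ha2 hval
    exact ⟨a.length - 1, by cases a with | nil => exact absurd rfl this | cons x l => simp⟩
  obtain ⟨v, hv, hrel, hpos⟩ := seqIJ_key n q a hq hqn ha2 hval t (by omega)
  have hdrop : a.drop t = a[t] :: a.drop (t+1) := List.drop_eq_getElem_cons (by omega)
  have hnil : a.drop (t+1) = [] := by rw [← ht]; exact List.drop_length
  rw [hdrop, hnil] at hv
  have hv' : v = (a[t] : ℚ) := by
    simp only [ncf, Option.some.injEq] at hv
    exact hv.symm
  have hgt : a.getD t 0 = a[t] := List.getD_eq_getElem _ _ (by omega)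
  have : a.length + 1 = t + 2 := by omega
  rw [this]
  have hI2 : (seqIJ n q (fun t => a.getD t 0) (t+2)).1
      = a[t] * (seqIJ n q (fun t => a.getD t 0) (t+1)).1
        - (seqIJ n q (fun t => a.getD t 0) t).1 := by
    simp only [seqIJ, hgt]
  rw [hI2]
  have : ((a[t] * (seqIJ n q (fun t => a.getD t 0) (t+1)).1
      - (seqIJ n q (fun t => a.getD t 0) t).1 : ℤ) : ℚ) = 0 := by
    push_cast
    rw [hv'] at hrel
    linear_combination hrel
  exact_mod_cast this

lemma seqIJ_I_nonneg : ∀ m ≤ a.length + 1, 0 ≤ (seqIJ n q (fun t => a.getD t 0) m).1 := by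
  intro m hm
  rcases Nat.lt_or_ge m (a.length + 1) with h | h
  · exact le_of_lt (seqIJ_I_pos n q a hq hqn ha2 hval m (by omega))
  · have : m = a.length + 1 := by omega
    rw [this, seqIJ_I_last n q a hq hqn ha2 hval]

lemma seqIJ_J_mono : ∀ m ≤ a.length,
    0 ≤ (seqIJ n q (fun t => a.getD t 0) m).2 ∧
    (seqIJ n q (fun t => a.getD t 0) m).2 < (seqIJ n q (fun t => a.getD t 0) (m+1)).2 := by
  intro m
  induction m with
  | zero => intro _; exact ⟨le_refl 0, by norm_num [seqIJ]⟩
  | succ k ih =>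
    intro hk
    obtain ⟨h0, h1⟩ := ih (by omega)
    have hak : 2 ≤ a.getD k 0 := by
      rw [List.getD_eq_getElem _ _ (by omega : k < a.length)]
      exact ha2 _ (List.getElem_mem _)
    constructor
    · omega
    · show (seqIJ n q (fun t => a.getD t 0) (k+1)).2
        < a.getD k 0 * (seqIJ n q (fun t => a.getD t 0) (k+1)).2
          - (seqIJ n q (fun t => a.getD t 0) k).2
      nlinarith [h0, h1, hak]

lemma seqIJ_J_nonneg : ∀ m ≤ a.length + 1, 0 ≤ (seqIJ n q (fun t => a.getD t 0) m).2 := by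
  intro m hm
  rcases Nat.lt_or_ge m (a.length + 1) with h | h
  · exact (seqIJ_J_mono n q a hq hqn ha2 hval m (by omega)).1
  · have hm' : m = a.length + 1 := by omega
    obtain ⟨h0, h1⟩ := seqIJ_J_mono n q a hq hqn ha2 hval a.length (le_refl _)
    rw [hm']
    omega

include hco

lemma seqIJ_J_last : (seqIJ n q (fun t => a.getD t 0) (a.length + 1)).2 = n ∧
    (seqIJ n q (fun t => a.getD t 0) a.length).1 = 1 := by
  set s := a.length
  set Is := (seqIJ n q (fun t => a.getD t 0) s).1 with hIs
  set Js1 := (seqIJ n q (fun t => a.getD t 0) (s+1)).2 with hJs1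
  have hdet := seqIJ_det n q (fun t => a.getD t 0) s
  rw [seqIJ_I_last n q a hq hqn ha2 hval] at hdet
  have hdet' : Is * Js1 = n := by linarith [hdet]
  have hdvd := seqIJ_dvd n q (fun t => a.getD t 0) (s+1)
  rw [seqIJ_I_last n q a hq hqn ha2 hval] at hdvd
  have hdvd' : n ∣ q * Js1 := by
    obtain ⟨c, hc⟩ := hdvd
    exact ⟨c, by linarith [hc]⟩
  have hcop : IsCoprime n q := Int.isCoprime_iff_gcd_eq_one.mpr hco
  have hnJ : n ∣ Js1 := hcop.dvd_of_dvd_mul_left hdvd'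
  have hJpos : 0 < Js1 := by
    obtain ⟨h0, h1⟩ := seqIJ_J_mono n q a hq hqn ha2 hval s (le_refl _)
    omega
  have hIpos : 0 < Is := seqIJ_I_pos n q a hq hqn ha2 hval s (le_refl _)
  obtain ⟨c, hc⟩ := hnJ
  have hn0 : 0 < n := by omega
  have hc1 : 1 ≤ c := by nlinarith
  have hIs1 : Is = 1 ∧ c = 1 := by constructor <;> nlinarith
  exact ⟨by rw [hc, hIs1.2, mul_one], hIs1.1⟩

lemma seqIJ_cone (i j : ℤ) (hi : 0 ≤ i) (hj : 0 ≤ j) (hdvd : n ∣ i + q * j) :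
    ∃ k ≤ a.length, ∃ α β : ℤ, 0 ≤ α ∧ 0 ≤ β ∧
      i = α * (seqIJ n q (fun t => a.getD t 0) k).1
          + β * (seqIJ n q (fun t => a.getD t 0) (k+1)).1 ∧
      j = α * (seqIJ n q (fun t => a.getD t 0) k).2
          + β * (seqIJ n q (fun t => a.getD t 0) (k+1)).2 := by
  classical
  set g : ℕ → ℤ := fun t => a.getD t 0 with hg
  set d : ℕ → ℤ := fun m => (seqIJ n q g m).1 * j - (seqIJ n q g m).2 * i with hd
  have hn0 : 0 < n := by omega
  have hd0 : 0 ≤ d 0 := by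
    show 0 ≤ (seqIJ n q g 0).1 * j - (seqIJ n q g 0).2 * i
    show 0 ≤ n * j - 0 * i
    nlinarith
  set k := Nat.findGreatest (fun m => 0 ≤ d m) a.length with hk
  have hkle : k ≤ a.length := Nat.findGreatest_le _
  have hkP : 0 ≤ d k := by
    rw [hk]; exact Nat.findGreatest_spec (P := fun m => 0 ≤ d m) (Nat.zero_le _) hd0
  have hk1 : d (k+1) ≤ 0 := by
    rcases Nat.lt_or_ge k a.length with h | h
    · have hlt : Nat.findGreatest (fun m => 0 ≤ d m) a.length < k + 1 := by
        rw [← hk]; omega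
      have := Nat.findGreatest_is_greatest hlt (by omega : k + 1 ≤ a.length)
      exact le_of_lt (lt_of_not_ge this)
    · have hks : k = a.length := by omega
      show (seqIJ n q g (k+1)).1 * j - (seqIJ n q g (k+1)).2 * i ≤ 0
      rw [hks, seqIJ_I_last n q a hq hqn ha2 hval,
        (seqIJ_J_last n q a hq hqn hco ha2 hval).1]
      nlinarith
  obtain ⟨e, he⟩ := hdvd
  have hdm : ∀ m, n ∣ d m := by
    intro m
    obtain ⟨c, hc⟩ := seqIJ_dvd n q g m
    exact ⟨c * j - (seqIJ n q g m).2 * e, by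
      show (seqIJ n q g m).1 * j - (seqIJ n q g m).2 * i = _
      linear_combination j * hc - (seqIJ n q g m).2 * he⟩
  obtain ⟨β, hβ⟩ := hdm k
  obtain ⟨γ, hγ⟩ := hdm (k+1)
  have hβ0 : 0 ≤ β := by nlinarith
  have hγ0 : γ ≤ 0 := by nlinarith
  have hdet := seqIJ_det n q g k
  have hdk : d k = (seqIJ n q g k).1 * j - (seqIJ n q g k).2 * i := rfl
  have hdk1 : d (k+1) = (seqIJ n q g (k+1)).1 * j - (seqIJ n q g (k+1)).2 * i := rfl
  rw [hdk] at hβ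
  rw [hdk1] at hγ
  refine ⟨k, hkle, -γ, β, by omega, hβ0, ?_, ?_⟩
  · have hni : n * i = n * ((-γ) * (seqIJ n q g k).1 + β * (seqIJ n q g (k+1)).1) := by
      linear_combination (seqIJ n q g (k+1)).1 * hβ - (seqIJ n q g k).1 * hγ - i * hdet
    exact mul_left_cancel₀ (by omega : n ≠ 0) hni
  · have hnj : n * j = n * ((-γ) * (seqIJ n q g k).2 + β * (seqIJ n q g (k+1)).2) := by
      linear_combination (seqIJ n q g (k+1)).2 * hβ - (seqIJ n q g k).2 * hγ - j * hdet
    exact mul_left_cancel₀ (by omega : n ≠ 0) hnj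

end pack

open MvPolynomial

/-- The substitution action of the diagonal matrix `diag(a, b)` on polynomials in two
variables: `x ↦ a·x`, `y ↦ b·y`. -/
noncomputable def scaleHom (a b : ℂ) :
    MvPolynomial (Fin 2) ℂ →ₐ[ℂ] MvPolynomial (Fin 2) ℂ :=
  aeval ![a • X 0, b • X 1]

/-! ### Polynomial lemmas about `scaleHom` -/

lemma scaleHom_monomial (u v c : ℂ) (d : Fin 2 →₀ ℕ) :
    scaleHom u v (monomial d c) = monomial d (u ^ d 0 * v ^ d 1 * c) := by
  rw [scaleHom, aeval_monomial, monomial_eq,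
    Finsupp.prod_fintype _ _ (fun i => pow_zero _),
    Finsupp.prod_fintype _ _ (fun i => pow_zero _),
    Fin.prod_univ_two, Fin.prod_univ_two]
  simp only [Matrix.cons_val_zero, Matrix.cons_val_one, Matrix.head_cons,
    smul_pow, algebraMap_eq, smul_eq_C_mul, mul_pow, map_mul, map_pow]
  ring

lemma scaleHom_coeff (u v : ℂ) (f : MvPolynomial (Fin 2) ℂ) (d : Fin 2 →₀ ℕ) :
    coeff d (scaleHom u v f) = u ^ d 0 * v ^ d 1 * coeff d f := by
  conv_lhs => rw [f.as_sum, map_sum]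
  rw [Finset.sum_congr rfl (fun e _ => scaleHom_monomial u v (coeff e f) e), coeff_sum]
  simp only [coeff_monomial]
  rcases Finset.decidableMem d f.support with h | h
  · rw [Finset.sum_eq_zero, MvPolynomial.notMem_support_iff.mp h, mul_zero]
    intro e he
    rw [if_neg]
    intro hed
    exact h (hed ▸ he)
  · rw [Finset.sum_eq_single d]
    · rw [if_pos rfl]
    · intro e he hed
      rw [if_neg hed]
    · intro hd
      exact absurd h hd

lemma scaleHom_eq_self_iff (u v : ℂ) (f : MvPolynomial (Fin 2) ℂ) :
    scaleHom u v f = f ↔ ∀ d ∈ f.support, u ^ d 0 * v ^ d 1 = 1 := by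
  constructor
  · intro h d hd
    have hc := congrArg (coeff d) h
    rw [scaleHom_coeff] at hc
    have hc0 : coeff d f ≠ 0 := MvPolynomial.mem_support_iff.mp hd
    have : u ^ d 0 * v ^ d 1 * coeff d f = 1 * coeff d f := by rw [one_mul]; exact hc
    exact mul_right_cancel₀ hc0 this
  · intro h
    apply MvPolynomial.ext
    intro d
    rw [scaleHom_coeff]
    by_cases hd : d ∈ f.support
    · rw [h d hd, one_mul]
    · rw [MvPolynomial.notMem_support_iff.mp hd, mul_zero]

lemma scaleHom_X0 (u v : ℂ) : scaleHom u v (X 0) = u • X 0 := by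
  simp [scaleHom]

lemma scaleHom_X1 (u v : ℂ) : scaleHom u v (X 1) = v • X 1 := by
  simp [scaleHom]

lemma scaleHom_monpow (u v : ℂ) (p r : ℕ) :
    scaleHom u v (X 0 ^ p * X 1 ^ r) = (u ^ p * v ^ r) • (X 0 ^ p * X 1 ^ r) := by
  rw [map_mul, map_pow, map_pow, scaleHom_X0, scaleHom_X1, smul_pow, smul_pow,
    smul_mul_assoc, mul_smul_comm, smul_smul]

lemma monomial_eq_two (c : ℂ) (d : Fin 2 →₀ ℕ) :
    monomial d c = C c * (X 0 ^ d 0 * X 1 ^ d 1) := by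
  rw [monomial_eq, Finsupp.prod_fintype _ _ (fun i => pow_zero _), Fin.prod_univ_two]

/-- The invariant ring `ℂ[x,y]^{Γ(n,q)}` is generated as a `ℂ`-algebra by the `e = s + 2`
monomials `z_k = x^{i_k} y^{j_k}`. -/
theorem stmt13 (n q : ℤ) (hq : 1 ≤ q) (hqn : q < n) (hco : Int.gcd n q = 1)
    (ζ : ℂ) (hζ : ζ = Complex.exp (2 * Real.pi * Complex.I / (n : ℂ)))
    (a : List ℤ) (ha2 : ∀ x ∈ a, 2 ≤ x)
    (hval : ncf a = some ((n : ℚ) / ((n : ℚ) - (q : ℚ)))) :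
    ∀ f : MvPolynomial (Fin 2) ℂ,
      (∀ k : ℤ, scaleHom (ζ ^ k) ((ζ ^ q) ^ k) f = f) ↔
        f ∈ Algebra.adjoin ℂ
          {m : MvPolynomial (Fin 2) ℂ |
            ∃ k ≤ a.length + 1,
              m = X 0 ^ (seqIJ n q (fun t => a.getD t 0) k).1.toNat *
                    X 1 ^ (seqIJ n q (fun t => a.getD t 0) k).2.toNat} := by
  intro f
  have hn0 : (0:ℤ) < n := by omega
  have hζ0 : ζ ≠ 0 := by rw [hζ]; exact Complex.exp_ne_zero _
  have hcast : ((n.toNat : ℕ) : ℂ) = ((n : ℤ) : ℂ) := by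
    exact_mod_cast congrArg (fun z : ℤ => (z : ℂ)) (Int.toNat_of_nonneg hn0.le)
  have hprim : IsPrimitiveRoot ζ n.toNat := by
    rw [hζ, ← hcast]
    exact Complex.isPrimitiveRoot_exp n.toNat (by omega)
  have hone : ∀ w : ℤ, n ∣ w → ζ ^ w = 1 := by
    intro w hw
    rw [← Int.toNat_of_nonneg hn0.le] at hw
    exact (hprim.zpow_eq_one_iff_dvd w).mpr hw
  have hone' : ∀ w : ℤ, ζ ^ w = 1 → n ∣ w := by
    intro w hw
    have := (hprim.zpow_eq_one_iff_dvd w).mp hw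
    rwa [Int.toNat_of_nonneg hn0.le] at this
  have hInn := seqIJ_I_nonneg n q a hq hqn ha2 hval
  have hJnn := seqIJ_J_nonneg n q a hq hqn ha2 hval
  constructor
  · -- invariant ⟹ in the adjoin
    intro hf
    have h1 := hf 1
    rw [zpow_one, zpow_one] at h1
    have hsupp : ∀ d ∈ f.support, n ∣ ((d 0 : ℤ) + q * (d 1 : ℤ)) := by
      intro d hd
      have h2 := (scaleHom_eq_self_iff ζ (ζ ^ q) f).mp h1 d hd
      apply hone'
      rw [zpow_add₀ hζ0, zpow_natCast, zpow_mul, zpow_natCast]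
      exact h2
    rw [f.as_sum]
    apply Subalgebra.sum_mem
    intro d hd
    obtain ⟨k, hk, α, β, hα, hβ, hieq, hjeq⟩ :=
      seqIJ_cone n q a hq hqn hco ha2 hval ((d 0 : ℤ)) ((d 1 : ℤ))
        (Int.natCast_nonneg _) (Int.natCast_nonneg _) (hsupp d hd)
    have hIk := hInn k (by omega)
    have hIk1 := hInn (k+1) (by omega)
    have hJk := hJnn k (by omega)
    have hJk1 := hJnn (k+1) (by omega)
    have e1 : d 0 = α.toNat * ((seqIJ n q (fun t => a.getD t 0) k).1).toNat
        + β.toNat * ((seqIJ n q (fun t => a.getD t 0) (k+1)).1).toNat := by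
      have : ((α.toNat * ((seqIJ n q (fun t => a.getD t 0) k).1).toNat
          + β.toNat * ((seqIJ n q (fun t => a.getD t 0) (k+1)).1).toNat : ℕ) : ℤ)
          = ((d 0 : ℕ) : ℤ) := by
        push_cast [Int.toNat_of_nonneg hα, Int.toNat_of_nonneg hβ,
          Int.toNat_of_nonneg hIk, Int.toNat_of_nonneg hIk1]
        linarith [hieq]
      exact_mod_cast this.symm
    have e2 : d 1 = α.toNat * ((seqIJ n q (fun t => a.getD t 0) k).2).toNat
        + β.toNat * ((seqIJ n q (fun t => a.getD t 0) (k+1)).2).toNat := by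
      have : ((α.toNat * ((seqIJ n q (fun t => a.getD t 0) k).2).toNat
          + β.toNat * ((seqIJ n q (fun t => a.getD t 0) (k+1)).2).toNat : ℕ) : ℤ)
          = ((d 1 : ℕ) : ℤ) := by
        push_cast [Int.toNat_of_nonneg hα, Int.toNat_of_nonneg hβ,
          Int.toNat_of_nonneg hJk, Int.toNat_of_nonneg hJk1]
        linarith [hjeq]
      exact_mod_cast this.symm
    rw [monomial_eq_two, e1, e2]
    have hmul : (X 0 ^ (α.toNat * ((seqIJ n q (fun t => a.getD t 0) k).1).toNat
          + β.toNat * ((seqIJ n q (fun t => a.getD t 0) (k+1)).1).toNat)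
        * X 1 ^ (α.toNat * ((seqIJ n q (fun t => a.getD t 0) k).2).toNat
          + β.toNat * ((seqIJ n q (fun t => a.getD t 0) (k+1)).2).toNat)
          : MvPolynomial (Fin 2) ℂ)
        = (X 0 ^ ((seqIJ n q (fun t => a.getD t 0) k).1).toNat
            * X 1 ^ ((seqIJ n q (fun t => a.getD t 0) k).2).toNat) ^ α.toNat
          * (X 0 ^ ((seqIJ n q (fun t => a.getD t 0) (k+1)).1).toNat
            * X 1 ^ ((seqIJ n q (fun t => a.getD t 0) (k+1)).2).toNat) ^ β.toNat
        := by ring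
    rw [hmul]
    refine Subalgebra.mul_mem _ ?_ (Subalgebra.mul_mem _ ?_ ?_)
    · rw [← algebraMap_eq]
      exact Subalgebra.algebraMap_mem _ _
    · refine Subalgebra.pow_mem _ (Algebra.subset_adjoin ?_) _
      exact ⟨k, by omega, rfl⟩
    · refine Subalgebra.pow_mem _ (Algebra.subset_adjoin ?_) _
      exact ⟨k+1, by omega, rfl⟩
  · -- in the adjoin ⟹ invariant
    intro hf t
    have key : Algebra.adjoin ℂ
        {m : MvPolynomial (Fin 2) ℂ |
          ∃ k ≤ a.length + 1,
            m = X 0 ^ (seqIJ n q (fun t => a.getD t 0) k).1.toNat *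
                  X 1 ^ (seqIJ n q (fun t => a.getD t 0) k).2.toNat}
        ≤ AlgHom.equalizer (scaleHom (ζ ^ t) ((ζ ^ q) ^ t))
            (AlgHom.id ℂ (MvPolynomial (Fin 2) ℂ)) := by
      apply Algebra.adjoin_le
      rintro m ⟨k, hk, rfl⟩
      have hIk := hInn k hk
      have hJk := hJnn k hk
      have hdvdk : n ∣ (((seqIJ n q (fun t => a.getD t 0) k).1.toNat : ℤ)
          + q * ((seqIJ n q (fun t => a.getD t 0) k).2.toNat : ℤ)) := by
        rw [Int.toNat_of_nonneg hIk, Int.toNat_of_nonneg hJk]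
        exact seqIJ_dvd n q _ k
      show scaleHom (ζ ^ t) ((ζ ^ q) ^ t) _ = _
      rw [scaleHom_monpow]
      have hu : (ζ ^ t) ^ (seqIJ n q (fun t => a.getD t 0) k).1.toNat
          * ((ζ ^ q) ^ t) ^ (seqIJ n q (fun t => a.getD t 0) k).2.toNat = 1 := by
        rw [← zpow_natCast (ζ ^ t), ← zpow_natCast ((ζ ^ q) ^ t),
          ← zpow_mul, ← zpow_mul, ← zpow_mul, ← zpow_add₀ hζ0]
        rw [show t * ((seqIJ n q (fun t => a.getD t 0) k).1.toNat : ℤ)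
            + q * (t * ((seqIJ n q (fun t => a.getD t 0) k).2.toNat : ℤ))
            = (((seqIJ n q (fun t => a.getD t 0) k).1.toNat : ℤ)
              + q * ((seqIJ n q (fun t => a.getD t 0) k).2.toNat : ℤ)) * t from by ring]
        rw [zpow_mul, hone _ hdvdk, one_zpow]
      rw [hu, one_smul]
      rfl
    exact key hf
end
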